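/- arXiv:1905.07309 — 2 statements merged into one kernel-verified Lean document; each statement's English description precedes it below -/
import Mathlib

section
/- Let X be a Hilbert space, and let F(t), t ≥ 0, be a family of bounded self-adjoint operators on X with F(0) = Id and such that for every φ in a dense subspace D the limit Lφ := lim_{t→0+}(F(t)φ − φ)/t exists. Then the family F*(t) := exp(i(F(t) − Id)) consists of unitary operators (so ‖F*(t)‖ = 1), F*(0) = Id, and lim_{t→0+}(F*(t)φ − φ)/t = iLφ for every φ ∈ D. -/
open Filter Topology Complex

noncomputable section ChernoffRotationAux

open NormedSpace

namespace ChernoffRotation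

/-- The remainder function `e^{iz} - 1 - iz`. -/
def crem : ℂ → ℂ := fun z => Complex.exp (Complex.I * z) - 1 - Complex.I * z

/-- `crem z / z`, extended by `0` at `0`. -/
def ch0 : ℂ → ℂ := fun z => crem z * z⁻¹

/-- Cutoff equal to `1` on `|z| ≤ δ/2` and `0` on `|z| ≥ δ`. -/
def crho (δ : ℝ) : ℂ → ℝ := fun z => min 1 (max 0 (2 - 2 * ‖z‖ / δ))

def ch1 (δ : ℝ) : ℂ → ℂ := fun z => ch0 z * ((crho δ z : ℝ) : ℂ)
def ch2 (δ : ℝ) : ℂ → ℂ := fun z => ch0 z * (1 - ((crho δ z : ℝ) : ℂ))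

/-- Cutoff equal to `0` on `|z| ≤ δ/4` and `1` on `|z| ≥ δ/2`. -/
def cffR (δ : ℝ) : ℂ → ℝ := fun z => min 1 (max 0 (4 * ‖z‖ / δ - 1))
def cff (δ : ℝ) : ℂ → ℂ := fun z => ((cffR δ z : ℝ) : ℂ)
def cpp (δ : ℝ) : ℂ → ℂ := fun z => cff δ z * z⁻¹

lemma crem_zero : crem 0 = 0 := by simp [crem]

lemma abs_crem_le_sq {z : ℂ} (hz : ‖z‖ ≤ 1) :
    ‖crem z‖ ≤ ‖z‖ ^ 2 := by
  have h : ‖Complex.I * z‖ ≤ 1 := by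
    rwa [norm_mul, Complex.norm_I, one_mul]
  simpa [crem, map_mul, Complex.norm_I] using Complex.norm_exp_sub_one_sub_id_le h

lemma abs_crem_real_le (x : ℝ) : ‖crem (x : ℂ)‖ ≤ 2 + |x| := by
  have h1 : ‖Complex.exp (Complex.I * x)‖ = 1 := by
    rw [mul_comm]; exact Complex.norm_exp_ofReal_mul_I x
  calc ‖crem (x : ℂ)‖
      ≤ ‖Complex.exp (Complex.I * x) - 1‖ + ‖Complex.I * x‖ :=
        norm_sub_le _ _
    _ ≤ (‖Complex.exp (Complex.I * x)‖ + 1) + ‖(x:ℂ)‖ := by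
        gcongr
        · exact (norm_sub_le _ _).trans (by simp)
        · rw [norm_mul, Complex.norm_I, one_mul]
    _ = 2 + |x| := by rw [h1, Complex.norm_real, Real.norm_eq_abs]; ring

lemma crho_nonneg (δ : ℝ) (z : ℂ) : 0 ≤ crho δ z :=
  le_min zero_le_one (le_max_left _ _)

lemma crho_le_one (δ : ℝ) (z : ℂ) : crho δ z ≤ 1 := min_le_left _ _

lemma crho_eq_one {δ : ℝ} (hδ : 0 < δ) {z : ℂ} (h : 2 * ‖z‖ ≤ δ) :
    crho δ z = 1 := by
  have h2 : (1 : ℝ) ≤ 2 - 2 * ‖z‖ / δ := by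
    have : 2 * ‖z‖ / δ ≤ 1 := by
      rw [div_le_one hδ]; linarith
    linarith
  rw [crho, min_eq_left (le_max_of_le_right h2)]

lemma crho_eq_zero {δ : ℝ} (hδ : 0 < δ) {z : ℂ} (h : δ ≤ ‖z‖) :
    crho δ z = 0 := by
  have h2 : 2 - 2 * ‖z‖ / δ ≤ 0 := by
    rw [sub_nonpos, le_div_iff₀ hδ]
    nlinarith
  simp [crho, max_eq_left h2]

lemma cffR_nonneg (δ : ℝ) (z : ℂ) : 0 ≤ cffR δ z :=
  le_min zero_le_one (le_max_left _ _)

lemma cffR_le_one (δ : ℝ) (z : ℂ) : cffR δ z ≤ 1 := min_le_left _ _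

lemma cffR_eq_zero {δ : ℝ} (hδ : 0 < δ) {z : ℂ} (h : 4 * ‖z‖ ≤ δ) :
    cffR δ z = 0 := by
  have h2 : 4 * ‖z‖ / δ - 1 ≤ 0 := by
    rw [sub_nonpos, div_le_one hδ]
    linarith
  simp [cffR, max_eq_left h2]

lemma cffR_eq_one {δ : ℝ} (hδ : 0 < δ) {z : ℂ} (h : δ ≤ 2 * ‖z‖) :
    cffR δ z = 1 := by
  have h2 : (1 : ℝ) ≤ 4 * ‖z‖ / δ - 1 := by
    rw [le_sub_iff_add_le, le_div_iff₀ hδ]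
    nlinarith
  rw [cffR, min_eq_left (le_max_of_le_right h2)]

lemma continuous_crho (δ : ℝ) : Continuous (crho δ) := by
  exact continuous_const.min (continuous_const.max (continuous_const.sub
    (continuous_const.mul continuous_norm |>.div_const δ)))

lemma continuous_cff (δ : ℝ) : Continuous (cff δ) := by
  exact Complex.continuous_ofReal.comp (continuous_const.min (continuous_const.max
    ((continuous_const.mul continuous_norm |>.div_const δ).sub continuous_const)))

lemma continuous_ch0 : Continuous ch0 := by
  rw [continuous_iff_continuousAt]
  intro z
  rcases eq_or_ne z 0 with rfl | hz
  · have hb : ∀ᶠ w : ℂ in 𝓝 0, ‖ch0 w‖ ≤ ‖w‖ := by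
      filter_upwards [Metric.closedBall_mem_nhds (0 : ℂ) one_pos] with w hw
      have hw1 : ‖w‖ ≤ 1 := by
        simpa [Complex.dist_eq] using hw
      rcases eq_or_ne w 0 with rfl | hw0
      · simp [ch0, crem_zero]
      · have : ‖ch0 w‖ = ‖crem w‖ * (‖w‖)⁻¹ := by
          simp [ch0, map_mul, map_inv₀]
        rw [this]
        rw [mul_inv_le_iff₀ (norm_pos_iff.mpr hw0)]
        calc ‖crem w‖ ≤ ‖w‖ ^ 2 := abs_crem_le_sq hw1
          _ = ‖w‖ * ‖w‖ := sq (‖w‖) ▸ by ring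
      done
    have h0 : ch0 0 = 0 := by simp [ch0, crem_zero]
    have : Tendsto ch0 (𝓝 0) (𝓝 0) :=
      squeeze_zero_norm' hb (by simpa using (continuous_norm (E := ℂ)).tendsto 0)
    rwa [ContinuousAt, h0]
  · exact ((Complex.continuous_exp.comp (continuous_const.mul continuous_id)).sub
      continuous_const |>.sub (continuous_const.mul continuous_id)).continuousAt.mul
      (continuousAt_inv₀ hz)

lemma continuous_ch1 (δ : ℝ) : Continuous (ch1 δ) :=
  continuous_ch0.mul (Complex.continuous_ofReal.comp (continuous_crho δ))

lemma continuous_ch2 (δ : ℝ) : Continuous (ch2 δ) :=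
  continuous_ch0.mul (continuous_const.sub
    (Complex.continuous_ofReal.comp (continuous_crho δ)))

lemma continuous_cpp {δ : ℝ} (hδ : 0 < δ) : Continuous (cpp δ) := by
  rw [continuous_iff_continuousAt]
  intro z
  rcases eq_or_ne z 0 with rfl | hz
  · have hev : cpp δ =ᶠ[𝓝 (0 : ℂ)] fun _ => (0 : ℂ) := by
      filter_upwards [Metric.ball_mem_nhds (0 : ℂ) (by positivity : (0:ℝ) < δ/4)] with w hw
      have : 4 * ‖w‖ ≤ δ := by
        have := mem_ball_zero_iff.mp hw
        linarith
      simp [cpp, cff, cffR_eq_zero hδ this]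
    exact (continuousAt_const (y := (0:ℂ))).congr hev.symm
  · exact ((continuous_cff δ).continuousAt).mul (continuousAt_inv₀ hz)

end ChernoffRotation
section RealBounds
namespace ChernoffRotation
open Complex

lemma norm_ch1_real {δ : ℝ} (hδ0 : 0 < δ) (hδ1 : δ ≤ 1) (x : ℝ) :
    ‖ch1 δ (x : ℂ)‖ ≤ δ := by
  rcases le_or_gt δ |x| with h | h
  · have h0 : crho δ (x:ℂ) = 0 := crho_eq_zero hδ0 (by rwa [Complex.norm_real, Real.norm_eq_abs])
    simp [ch1, h0, hδ0.le]
  · rcases eq_or_ne x 0 with rfl | hx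
    · simp [ch1, ch0, crem_zero, hδ0.le]
    · have hab : ‖(x:ℂ)‖ = |x| := by rw [Complex.norm_real, Real.norm_eq_abs]
      have h1 : ‖(x:ℂ)‖ ≤ 1 := by rw [hab]; linarith
      have hcrem : ‖crem (x:ℂ)‖ ≤ |x| ^ 2 := by
        simpa [hab] using abs_crem_le_sq h1
      have hrho : |crho δ (x:ℂ)| ≤ 1 :=
        abs_le.2 ⟨by linarith [crho_nonneg δ (x:ℂ)], crho_le_one δ (x:ℂ)⟩
      have hnorm : ‖ch1 δ (x:ℂ)‖ =
          ‖crem (x:ℂ)‖ * (|x|)⁻¹ * |crho δ (x:ℂ)| := by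
        simp [ch1, ch0, map_mul, map_inv₀, hab]
      rw [hnorm]
      have hxpos : (0:ℝ) < |x| := abs_pos.2 hx
      calc ‖crem (x:ℂ)‖ * (|x|)⁻¹ * |crho δ (x:ℂ)|
          ≤ |x| ^ 2 * (|x|)⁻¹ * 1 := by gcongr <;> positivity
        _ = |x| := by field_simp [pow_two]
        _ ≤ δ := h.le

lemma norm_ch2_real {δ : ℝ} (hδ0 : 0 < δ) (x : ℝ) :
    ‖ch2 δ (x : ℂ)‖ ≤ 1 + 4 / δ := by
  rcases le_or_gt (2 * |x|) δ with h | h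
  · have h0 : crho δ (x:ℂ) = 1 := crho_eq_one hδ0 (by rwa [Complex.norm_real, Real.norm_eq_abs])
    have hz : ch2 δ (x:ℂ) = 0 := by simp [ch2, h0]
    rw [hz, norm_zero]
    positivity
  · have hab : ‖(x:ℂ)‖ = |x| := by rw [Complex.norm_real, Real.norm_eq_abs]
    have hxpos : (0:ℝ) < |x| := by linarith
    have hcrem : ‖crem (x:ℂ)‖ ≤ 2 + |x| := abs_crem_real_le x
    have hrho : ‖1 - ((crho δ (x:ℂ) : ℝ) : ℂ)‖ ≤ 1 := by
      rw [← Complex.ofReal_one, ← Complex.ofReal_sub, Complex.norm_real, Real.norm_eq_abs]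
      exact abs_le.2 ⟨by linarith [crho_le_one δ (x:ℂ)], by linarith [crho_nonneg δ (x:ℂ)]⟩
    have hnorm : ‖ch2 δ (x:ℂ)‖ =
        ‖crem (x:ℂ)‖ * (|x|)⁻¹ * ‖1 - ((crho δ (x:ℂ) : ℝ) : ℂ)‖ := by
      simp [ch2, ch0, map_mul, map_inv₀, hab]
    rw [hnorm]
    have step1 : ‖crem (x:ℂ)‖ * (|x|)⁻¹ * ‖1 - ((crho δ (x:ℂ) : ℝ) : ℂ)‖
        ≤ (2 + |x|) * (|x|)⁻¹ * 1 := by gcongr <;> positivity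
    refine step1.trans ?_
    rw [mul_one]
    have e : (2 + |x|) * (|x|)⁻¹ = 2 / |x| + 1 := by field_simp
    rw [e]
    have : 2 / |x| ≤ 4 / δ := by
      rw [div_le_div_iff₀ hxpos hδ0]
      linarith
    linarith

end ChernoffRotation
end RealBounds
section CfcPart
namespace ChernoffRotation
open Complex NormedSpace

variable {X : Type*} [NormedAddCommGroup X] [InnerProductSpace ℂ X] [CompleteSpace X]

lemma norm_cfc_le_of_real (a : X →L[ℂ] X) (ha : IsSelfAdjoint a) {g : ℂ → ℂ} {c : ℝ}
    (hc : 0 ≤ c) (hg : ∀ x : ℝ, ‖g (x : ℂ)‖ ≤ c) : ‖cfc g a‖ ≤ c :=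
  norm_cfc_le hc fun z hz => by rw [ha.mem_spectrum_eq_re hz]; exact hg z.re

lemma expI_eq_cfc (a : X →L[ℂ] X) (ha : IsSelfAdjoint a) :
    exp (I • a) = cfc (fun z : ℂ => Complex.exp (I * z)) a := by
  have hna : IsStarNormal (I • a) := by
    constructor
    rw [star_smul, ha.star_eq, star_def, conj_I]
    simpa using (Commute.refl a).neg_left.smul_left (I) |>.smul_right I |>.neg_left
  rw [← CFC.complex_exp_eq_normedSpace_exp (a := I • a) hna,
    ← cfc_comp_smul I Complex.exp a (by fun_prop) ha.isStarNormal]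
  simp [smul_eq_mul]

lemma factor_crem {δ : ℝ} (hδ0 : 0 < δ) (z : ℂ) :
    (ch1 δ z + ch2 δ z) * z = crem z := by
  rcases eq_or_ne z 0 with rfl | hz
  · simp [crem_zero]
  · have : ch1 δ z + ch2 δ z = crem z * z⁻¹ := by
      unfold ch1 ch2 ch0; ring
    rw [this, inv_mul_cancel_right₀ hz]

lemma ch2_mul_cff {δ : ℝ} (hδ0 : 0 < δ) (z : ℂ) :
    ch2 δ z * cff δ z = ch2 δ z := by
  rcases le_or_gt (2 * ‖z‖) δ with h | h
  · have h1 : crho δ z = 1 := crho_eq_one hδ0 h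
    simp [ch2, h1]
  · have h1 : cffR δ z = 1 := cffR_eq_one hδ0 h.le
    simp [cff, h1]

lemma cpp_mul_id {δ : ℝ} (hδ0 : 0 < δ) (z : ℂ) :
    cpp δ z * z = cff δ z := by
  rcases eq_or_ne z 0 with rfl | hz
  · have h0 : cffR δ (0:ℂ) = 0 := cffR_eq_zero hδ0 (by simp [hδ0.le])
    simp [cpp, cff, h0]
  · exact inv_mul_cancel_right₀ hz _

lemma cfc_crem_eq (a : X →L[ℂ] X) (ha : IsSelfAdjoint a) :
    cfc crem a = exp (I • a) - 1 - I • a := by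
  have hn := ha.isStarNormal
  have h1 : cfc crem a = cfc (fun z : ℂ => Complex.exp (I * z)) a
      - cfc (fun _ : ℂ => 1) a - cfc (fun z : ℂ => I * z) a := by
    rw [← cfc_sub (fun z : ℂ => Complex.exp (I * z)) (fun _ : ℂ => (1:ℂ)) a
      (by fun_prop) (by fun_prop),
      ← cfc_sub (fun z : ℂ => Complex.exp (I * z) - 1) (fun z : ℂ => I * z) a
      (by fun_prop) (by fun_prop)]
    rfl
  rw [h1, cfc_const_one ℂ a hn, cfc_const_mul_id I a hn, expI_eq_cfc a ha]

lemma cfc_crem_factored (a : X →L[ℂ] X) (ha : IsSelfAdjoint a) {δ : ℝ} (hδ0 : 0 < δ) :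
    cfc crem a = (cfc (ch1 δ) a + cfc (ch2 δ) a) * a := by
  have hn := ha.isStarNormal
  calc cfc crem a = cfc (fun z => (ch1 δ z + ch2 δ z) * z) a :=
        cfc_congr fun z _ => (factor_crem hδ0 z).symm
    _ = cfc (fun z => ch1 δ z + ch2 δ z) a * cfc (fun x : ℂ => x) a :=
        cfc_mul _ _ a (((continuous_ch1 δ).add (continuous_ch2 δ)).continuousOn) (by fun_prop)
    _ = (cfc (ch1 δ) a + cfc (ch2 δ) a) * a := by
        rw [cfc_id' ℂ a hn,
          cfc_add (a := a) (ch1 δ) (ch2 δ) ((continuous_ch1 δ).continuousOn)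
            ((continuous_ch2 δ).continuousOn)]

lemma cfc_ch2_factor (a : X →L[ℂ] X) (ha : IsSelfAdjoint a) {δ : ℝ} (hδ0 : 0 < δ) :
    cfc (ch2 δ) a = cfc (ch2 δ) a * cfc (cff δ) a := by
  rw [← cfc_mul (ch2 δ) (cff δ) a ((continuous_ch2 δ).continuousOn)
    ((continuous_cff δ).continuousOn)]
  exact cfc_congr fun z _ => (ch2_mul_cff hδ0 z).symm

lemma cfc_cff_factor (a : X →L[ℂ] X) (ha : IsSelfAdjoint a) {δ : ℝ} (hδ0 : 0 < δ) :
    cfc (cff δ) a = cfc (cpp δ) a * a := by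
  have hn := ha.isStarNormal
  calc cfc (cff δ) a = cfc (fun z => cpp δ z * z) a :=
        cfc_congr fun z _ => (cpp_mul_id hδ0 z).symm
    _ = cfc (cpp δ) a * cfc (fun x : ℂ => x) a :=
        cfc_mul _ _ a ((continuous_cpp hδ0).continuousOn) (by fun_prop)
    _ = cfc (cpp δ) a * a := by rw [cfc_id' ℂ a hn]

lemma norm_cff_le_one (δ : ℝ) (z : ℂ) : ‖cff δ z‖ ≤ 1 := by
  rw [cff, Complex.norm_real, Real.norm_eq_abs]
  exact abs_le.2 ⟨by linarith [cffR_nonneg δ z], cffR_le_one δ z⟩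

lemma norm_cpp_real {δ : ℝ} (hδ0 : 0 < δ) (x : ℝ) : ‖cpp δ (x : ℂ)‖ ≤ 4 / δ := by
  rcases le_or_gt (4 * |x|) δ with h | h
  · have h0 : cffR δ (x:ℂ) = 0 := cffR_eq_zero hδ0 (by rwa [Complex.norm_real, Real.norm_eq_abs])
    simp [cpp, cff, h0]
    positivity
  · have hxpos : (0:ℝ) < |x| := by linarith
    have : ‖cpp δ (x:ℂ)‖ ≤ 1 * |x|⁻¹ := by
      rw [cpp, norm_mul, norm_inv, Complex.norm_real, Real.norm_eq_abs]
      gcongr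
      exact norm_cff_le_one δ _
    refine this.trans ?_
    rw [one_mul, inv_le_comm₀ hxpos (by positivity)]
    rw [inv_div, div_le_iff₀ (by norm_num : (0:ℝ) < 4)]
    linarith

lemma keyEstimate (a : X →L[ℂ] X) (ha : IsSelfAdjoint a) {δ : ℝ} (hδ0 : 0 < δ)
    (hδ1 : δ ≤ 1) (φ : X) :
    ‖exp (I • a) φ - φ - I • (a φ)‖ ≤
      δ * ‖a φ‖ + (1 + 4 / δ) * ‖cfc (cff δ) a (a φ)‖ := by
  have hsplit : exp (I • a) φ - φ - I • (a φ)
      = cfc (ch1 δ) a (a φ) + cfc (ch2 δ) a (a φ) := by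
    have h := (cfc_crem_eq a ha).symm.trans (cfc_crem_factored a ha hδ0)
    have happ := congrArg (fun T : X →L[ℂ] X => T φ) h
    simpa [ContinuousLinearMap.sub_apply, ContinuousLinearMap.add_apply,
      ContinuousLinearMap.mul_apply, ContinuousLinearMap.one_apply,
      ContinuousLinearMap.smul_apply] using happ
  rw [hsplit]
  have b1 : ‖cfc (ch1 δ) a (a φ)‖ ≤ δ * ‖a φ‖ :=
    ((cfc (ch1 δ) a).le_opNorm (a φ)).trans
      (by gcongr; exact norm_cfc_le_of_real a ha hδ0.le (norm_ch1_real hδ0 hδ1))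
  have b2 : ‖cfc (ch2 δ) a (a φ)‖ ≤ (1 + 4 / δ) * ‖cfc (cff δ) a (a φ)‖ := by
    have h2 : cfc (ch2 δ) a (a φ) = cfc (ch2 δ) a (cfc (cff δ) a (a φ)) := by
      conv_lhs => rw [cfc_ch2_factor a ha hδ0]
      rfl
    rw [h2]
    refine ((cfc (ch2 δ) a).le_opNorm _).trans ?_
    gcongr
    exact norm_cfc_le_of_real a ha (by positivity) (norm_ch2_real hδ0)
  exact (norm_add_le _ _).trans (add_le_add b1 b2)

lemma cutoffEstimate (a : X →L[ℂ] X) (ha : IsSelfAdjoint a) {δ : ℝ} (hδ0 : 0 < δ)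
    (v χ : X) :
    ‖cfc (cff δ) a v‖ ≤ ‖v - χ‖ + (4 / δ) * ‖a χ‖ := by
  have hsplit : cfc (cff δ) a v = cfc (cff δ) a (v - χ) + cfc (cpp δ) a (a χ) := by
    have h2 : cfc (cff δ) a χ = cfc (cpp δ) a (a χ) := by
      conv_lhs => rw [cfc_cff_factor a ha hδ0]
      rfl
    rw [map_sub, h2]
    abel
  rw [hsplit]
  have b1 : ‖cfc (cff δ) a (v - χ)‖ ≤ ‖v - χ‖ := by
    refine ((cfc (cff δ) a).le_opNorm _).trans ?_
    calc ‖cfc (cff δ) a‖ * ‖v - χ‖ ≤ 1 * ‖v - χ‖ := by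
          gcongr
          exact norm_cfc_le_of_real a ha zero_le_one fun x => norm_cff_le_one δ _
      _ = ‖v - χ‖ := one_mul _
  have b2 : ‖cfc (cpp δ) a (a χ)‖ ≤ (4 / δ) * ‖a χ‖ :=
    ((cfc (cpp δ) a).le_opNorm _).trans
      (by gcongr; exact norm_cfc_le_of_real a ha (by positivity) (norm_cpp_real hδ0))
  exact (norm_add_le _ _).trans (add_le_add b1 b2)

end ChernoffRotation
end CfcPart
set_option maxHeartbeats 1000000 in
open ChernoffRotation in
/-- The "rotation" construction: if `(F t)` is a Chernoff family of bounded self-adjoint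
operators with derivative `L` at zero on a dense subspace `D`, then
`F*(t) = exp(i(F t - Id))` is a family of unitary operators with `F*(0) = Id` and
derivative `iL` at zero on `D`. -/
theorem chernoff_rotation_to_schroedinger_group
    {X : Type*} [NormedAddCommGroup X] [InnerProductSpace ℂ X] [CompleteSpace X] [Nontrivial X]
    (F : ℝ → X →L[ℂ] X) (hFsa : ∀ t ≥ (0 : ℝ), IsSelfAdjoint (F t)) (hF0 : F 0 = 1)
    (D : Submodule ℂ X) (hD : Dense (D : Set X)) (L : X → X)
    (hL : ∀ φ ∈ D, Tendsto (fun t : ℝ => (t : ℂ)⁻¹ • (F t φ - φ)) (𝓝[>] 0) (𝓝 (L φ)))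
    (Fstar : ℝ → X →L[ℂ] X)
    (hFstar : ∀ t, Fstar t = NormedSpace.exp (Complex.I • (F t - 1))) :
    (∀ t ≥ (0 : ℝ), Fstar t ∈ unitary (X →L[ℂ] X)) ∧
    (∀ t ≥ (0 : ℝ), ‖Fstar t‖ = 1) ∧
    Fstar 0 = 1 ∧
    (∀ φ ∈ D, Tendsto (fun t : ℝ => (t : ℂ)⁻¹ • (Fstar t φ - φ)) (𝓝[>] 0)
      (𝓝 (Complex.I • L φ))) := by
  have hsa : ∀ t > (0 : ℝ), IsSelfAdjoint (F t - 1) :=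
    fun t ht => (hFsa t ht.le).sub (IsSelfAdjoint.one _)
  have hUnit : ∀ t ≥ (0 : ℝ), Fstar t ∈ unitary (X →L[ℂ] X) := by
    intro t ht
    rw [hFstar t]
    letI : NormedAlgebra ℚ (X →L[ℂ] X) := .restrictScalars ℚ ℂ (X →L[ℂ] X)
    exact exp_mem_unitary_of_mem_skewAdjoint
      (((hFsa t ht).sub (IsSelfAdjoint.one _)).smul_mem_skewAdjoint conj_I)
  refine ⟨hUnit, fun t ht => CStarRing.norm_of_mem_unitary (hUnit t ht), ?_, ?_⟩
  · rw [hFstar 0, hF0, sub_self, smul_zero, NormedSpace.exp_zero]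
  intro φ hφ
  have hLφ := hL φ hφ
  rw [Metric.tendsto_nhds]
  intro ε hε
  -- choose δ
  set δ : ℝ := min 1 (ε / (4 * (‖L φ‖ + 1))) with hδdef
  have hδ0 : 0 < δ := lt_min one_pos (by positivity)
  have hδ1 : δ ≤ 1 := min_le_left _ _
  set M : ℝ := 1 + 4 / δ with hMdef
  have hM : 0 < M := by positivity
  -- choose χ ∈ D close to L φ
  obtain ⟨χ, hχmem⟩ := Metric.dense_iff.mp hD (L φ) (ε / (8 * M)) (by positivity)
  have hχball := hχmem.1
  have hχD : χ ∈ D := hχmem.2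
  have hχnorm : ‖L φ - χ‖ < ε / (8 * M) := by
    rw [← dist_eq_norm, dist_comm]
    exact Metric.mem_ball.mp hχball
  -- F t χ - χ → 0
  have hχlim := hL χ hχD
  have hcoe : Tendsto (fun t : ℝ => (t : ℂ)) (𝓝[>] (0:ℝ)) (𝓝 0) := by
    have := Complex.continuous_ofReal.tendsto (0 : ℝ)
    simpa using this.mono_left nhdsWithin_le_nhds
  have haχ : Tendsto (fun t : ℝ => F t χ - χ) (𝓝[>] (0:ℝ)) (𝓝 0) := by
    have h2 := hcoe.smul hχlim
    rw [zero_smul] at h2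
    refine h2.congr' ?_
    filter_upwards [self_mem_nhdsWithin] with t ht
    rw [smul_inv_smul₀ (by exact_mod_cast (ne_of_gt ht))]
  -- eventual bounds
  have ev1 : ∀ᶠ t : ℝ in 𝓝[>] (0:ℝ),
      ‖(t : ℂ)⁻¹ • (F t φ - φ) - L φ‖ < min (ε / (4 * (1 + M))) 1 := by
    have := Metric.tendsto_nhds.mp hLφ (min (ε / (4 * (1 + M))) 1)
      (lt_min (by positivity) one_pos)
    filter_upwards [this] with t h
    rwa [dist_eq_norm] at h
  have ev2 : ∀ᶠ t : ℝ in 𝓝[>] (0:ℝ), ‖F t χ - χ‖ < ε * δ / (16 * M) := by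
    have := Metric.tendsto_nhds.mp haχ (ε * δ / (16 * M)) (by positivity)
    filter_upwards [this] with t h
    rwa [dist_eq_norm, sub_zero] at h
  filter_upwards [ev1, ev2, self_mem_nhdsWithin] with t h1 h2 ht
  have ht0 : (0:ℝ) < t := ht
  have htC : ((t:ℝ) : ℂ) ≠ 0 := by exact_mod_cast ne_of_gt ht0
  have ha := hsa t ht0
  set a : X →L[ℂ] X := F t - 1 with hadef
  have haφ : a φ = F t φ - φ := by
    simp [hadef, ContinuousLinearMap.sub_apply]
  set g : X := (t : ℂ)⁻¹ • (F t φ - φ) with hgdef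
  -- the basic algebraic decomposition
  have hstep : (t : ℂ)⁻¹ • (Fstar t φ - φ) - Complex.I • L φ
      = (t : ℂ)⁻¹ • (NormedSpace.exp (Complex.I • a) φ - φ - Complex.I • (a φ))
        + Complex.I • (g - L φ) := by
    rw [hFstar t, hgdef, haφ, ← hadef]
    module
  have hnormt : ‖((t:ℝ) : ℂ)⁻¹‖ = t⁻¹ := by
    rw [norm_inv, Complex.norm_real, Real.norm_eq_abs, abs_of_pos ht0]
  -- norm bounds
  have n1 : ‖(t : ℂ)⁻¹ • (Fstar t φ - φ) - Complex.I • L φ‖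
      ≤ t⁻¹ * ‖NormedSpace.exp (Complex.I • a) φ - φ - Complex.I • (a φ)‖ + ‖g - L φ‖ := by
    rw [hstep]
    refine (norm_add_le _ _).trans ?_
    rw [norm_smul, hnormt, norm_smul, Complex.norm_I, one_mul]
  have key := keyEstimate a ha hδ0 hδ1 φ
  have n2 : t⁻¹ * ‖NormedSpace.exp (Complex.I • a) φ - φ - Complex.I • (a φ)‖
      ≤ δ * ‖g‖ + M * ‖cfc (cff δ) a g‖ := by
    have e_g : ‖g‖ = t⁻¹ * ‖a φ‖ := by
      rw [hgdef, ← haφ, norm_smul, hnormt]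
    have e_c : ‖cfc (cff δ) a g‖ = t⁻¹ * ‖cfc (cff δ) a (a φ)‖ := by
      rw [hgdef, ← haφ, map_smul, norm_smul, hnormt]
    rw [e_g, e_c]
    calc t⁻¹ * ‖NormedSpace.exp (Complex.I • a) φ - φ - Complex.I • (a φ)‖
        ≤ t⁻¹ * (δ * ‖a φ‖ + M * ‖cfc (cff δ) a (a φ)‖) := by
          gcongr
      _ = δ * (t⁻¹ * ‖a φ‖) + M * (t⁻¹ * ‖cfc (cff δ) a (a φ)‖) := by ring
  have n3 : ‖cfc (cff δ) a g‖ ≤ (‖g - L φ‖ + ‖L φ - χ‖) + (4 / δ) * ‖F t χ - χ‖ := by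
    have := cutoffEstimate a ha hδ0 g χ
    have haχ' : a χ = F t χ - χ := by simp [hadef, ContinuousLinearMap.sub_apply]
    rw [haχ'] at this
    refine this.trans ?_
    gcongr
    calc ‖g - χ‖ = ‖(g - L φ) + (L φ - χ)‖ := by abel_nf
      _ ≤ ‖g - L φ‖ + ‖L φ - χ‖ := norm_add_le _ _
  -- numeric combination
  have hgLφ : ‖g - L φ‖ < min (ε / (4 * (1 + M))) 1 := h1
  have hg1 : ‖g - L φ‖ < ε / (4 * (1 + M)) := lt_of_lt_of_le hgLφ (min_le_left _ _)
  have hg2 : ‖g - L φ‖ < 1 := lt_of_lt_of_le hgLφ (min_le_right _ _)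
  have hgnorm : ‖g‖ < ‖L φ‖ + 1 := by
    calc ‖g‖ ≤ ‖g - L φ‖ + ‖L φ‖ := by
          simpa using norm_add_le (g - L φ) (L φ)
      _ < ‖L φ‖ + 1 := by linarith
  have hA : (1 + M) * ‖g - L φ‖ < ε / 4 := by
    have := mul_lt_mul_of_pos_left hg1 (by positivity : (0:ℝ) < 1 + M)
    calc (1 + M) * ‖g - L φ‖ < (1 + M) * (ε / (4 * (1 + M))) := this
      _ = ε / 4 := by field_simp
  have hB : δ * ‖g‖ ≤ ε / 4 := by
    have hδle : δ ≤ ε / (4 * (‖L φ‖ + 1)) := min_le_right _ _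
    calc δ * ‖g‖ ≤ (ε / (4 * (‖L φ‖ + 1))) * (‖L φ‖ + 1) := by
          apply mul_le_mul hδle hgnorm.le (norm_nonneg _) (by positivity)
      _ = ε / 4 := by field_simp
  have hC : M * ‖L φ - χ‖ < ε / 8 := by
    have := mul_lt_mul_of_pos_left hχnorm hM
    calc M * ‖L φ - χ‖ < M * (ε / (8 * M)) := this
      _ = ε / 8 := by field_simp
  have hD2 : M * ((4 / δ) * ‖F t χ - χ‖) < ε / 4 := by
    have h4δ : (0:ℝ) < 4 / δ := by positivity
    have := mul_lt_mul_of_pos_left h2 h4δ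
    have := mul_lt_mul_of_pos_left this hM
    calc M * ((4 / δ) * ‖F t χ - χ‖) < M * ((4 / δ) * (ε * δ / (16 * M))) := this
      _ = ε / 4 := by field_simp; ring
  have n4 : M * ‖cfc (cff δ) a g‖
      ≤ M * ‖g - L φ‖ + M * ‖L φ - χ‖ + M * ((4 / δ) * ‖F t χ - χ‖) := by
    calc M * ‖cfc (cff δ) a g‖
        ≤ M * ((‖g - L φ‖ + ‖L φ - χ‖) + (4 / δ) * ‖F t χ - χ‖) :=
          mul_le_mul_of_nonneg_left n3 hM.le
      _ = M * ‖g - L φ‖ + M * ‖L φ - χ‖ + M * ((4 / δ) * ‖F t χ - χ‖) := by ring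
  rw [dist_eq_norm]
  have hδg : δ * ‖g‖ ≥ 0 := by positivity
  nlinarith [n1, n2, n4, hA, hB, hC, hD2, norm_nonneg (g - L φ), hM.le]
end ChernoffRotationAux
end

section
/- Let μ be a symmetric Borel probability measure on ℝ with finite third absolute moment and positive second moment a := ∫ ε² dμ(ε) > 0. Define U_μ(t)φ(x) := ∫_ℝ φ(x + ε√t) dμ(ε) on X = C_∞(ℝ). Then each U_μ(t) is a linear contraction on X, U_μ(0) = Id, and for every Schwartz function φ, (U_μ(t)φ − φ)/t converges uniformly to (a/2)φ'' as t → 0+. -/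
open Filter Topology ZeroAtInfty MeasureTheory

lemma c0_norm_le' {f : C₀(ℝ, ℝ)} {C : ℝ} (hC : 0 ≤ C) (h : ∀ x, |f x| ≤ C) : ‖f‖ ≤ C := by
  rw [← ZeroAtInftyContinuousMap.norm_toBCF_eq_norm]
  exact (BoundedContinuousFunction.norm_le hC).2 h

lemma c0_apply_le_norm' (f : C₀(ℝ, ℝ)) (x : ℝ) : |f x| ≤ ‖f‖ := by
  rw [← ZeroAtInftyContinuousMap.norm_toBCF_eq_norm]
  exact f.toBCF.norm_coe_le_norm x

lemma abs_le_of_mem_uIcc' {s h : ℝ} (hs : s ∈ Set.uIcc 0 h) : |s| ≤ |h| := by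
  rw [Set.mem_uIcc] at hs
  have h1 := le_abs_self h
  have h2 := neg_abs_le h
  rcases hs with ⟨ha, hb⟩ | ⟨ha, hb⟩ <;> rw [abs_le] <;> constructor <;> linarith

lemma taylor3_bound' {f : ℝ → ℝ} (hf : ContDiff ℝ (⊤ : ℕ∞) f) {M : ℝ}
    (hM : ∀ y, |deriv (deriv (deriv f)) y| ≤ M) (x h : ℝ) :
    |f (x + h) - f x - deriv f x * h - deriv (deriv f) x * h ^ 2 / 2| ≤ M * |h| ^ 3 := by
  obtain ⟨hd0, hf1⟩ := contDiff_infty_iff_deriv.mp hf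
  obtain ⟨hd1, hf2⟩ := contDiff_infty_iff_deriv.mp hf1
  obtain ⟨hd2, -⟩ := contDiff_infty_iff_deriv.mp hf2
  set f1 := deriv f with hf1d
  set f2 := deriv f1 with hf2d
  have hM0 : 0 ≤ M := le_trans (abs_nonneg _) (hM 0)
  -- Step A: f2 is M-Lipschitz
  have stepA : ∀ u v : ℝ, |f2 v - f2 u| ≤ M * |v - u| := by
    intro u v
    have := Convex.norm_image_sub_le_of_norm_deriv_le (f := f2) (s := Set.univ)
      (fun y _ => hd2 y) (fun y _ => by
        simpa [Real.norm_eq_abs] using hM y) convex_univ (Set.mem_univ u) (Set.mem_univ v)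
    simpa [Real.norm_eq_abs] using this
  -- auxiliary functions
  set G1 : ℝ → ℝ := fun s => f1 (x + s) - f1 x - f2 x * s with hG1
  set G : ℝ → ℝ := fun s => f (x + s) - f x - f1 x * s - f2 x * (s ^ 2 / 2) with hG
  have dG1 : ∀ s : ℝ, HasDerivAt G1 (f2 (x + s) - f2 x) s := by
    intro s
    have d1 : HasDerivAt (fun s => f1 (x + s)) (f2 (x + s)) s :=
      (hd1 (x + s)).hasDerivAt.comp_const_add x s
    have d2 : HasDerivAt (fun s : ℝ => f2 x * s) (f2 x) s := by
      simpa using (hasDerivAt_id s).const_mul (f2 x)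
    exact (d1.sub_const (f1 x)).sub d2
  have dG : ∀ s : ℝ, HasDerivAt G (G1 s) s := by
    intro s
    have d1 : HasDerivAt (fun s => f (x + s)) (f1 (x + s)) s :=
      (hd0 (x + s)).hasDerivAt.comp_const_add x s
    have d2 : HasDerivAt (fun s : ℝ => f1 x * s) (f1 x) s := by
      simpa using (hasDerivAt_id s).const_mul (f1 x)
    have d3 : HasDerivAt (fun s : ℝ => f2 x * (s ^ 2 / 2)) (f2 x * s) s := by
      have := ((hasDerivAt_pow 2 s).div_const 2).const_mul (f2 x)
      exact this.congr_deriv (by push_cast; ring)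
    exact (((d1.sub_const (f x)).sub d2).sub d3).congr_deriv (by simp [hG1]; try ring)
  -- Step B : bound on G1 on uIcc 0 h
  have stepB : ∀ s ∈ Set.uIcc 0 h, |G1 s| ≤ M * |h| * |h| := by
    intro s hs
    have key := Convex.norm_image_sub_le_of_norm_deriv_le (f := G1) (s := Set.uIcc 0 h)
      (fun u _ => (dG1 u).differentiableAt)
      (fun u hu => by
        rw [(dG1 u).deriv]
        calc ‖f2 (x + u) - f2 x‖ = |f2 (x + u) - f2 x| := Real.norm_eq_abs _
          _ ≤ M * |x + u - x| := stepA x (x + u)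
          _ = M * |u| := by ring_nf
          _ ≤ M * |h| := mul_le_mul_of_nonneg_left (abs_le_of_mem_uIcc' hu) hM0)
      (convex_uIcc 0 h) Set.left_mem_uIcc hs
    have hG10 : G1 0 = 0 := by simp [hG1]
    rw [hG10, sub_zero, Real.norm_eq_abs, Real.norm_eq_abs, sub_zero] at key
    calc |G1 s| ≤ M * |h| * |s| := key
      _ ≤ M * |h| * |h| :=
        mul_le_mul_of_nonneg_left (abs_le_of_mem_uIcc' hs) (by positivity)
  -- Step C : bound on G h
  have stepC : |G h| ≤ M * |h| * |h| * |h| := by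
    have key := Convex.norm_image_sub_le_of_norm_deriv_le (f := G) (s := Set.uIcc 0 h)
      (fun u _ => (dG u).differentiableAt)
      (fun u hu => by rw [(dG u).deriv, Real.norm_eq_abs]; exact stepB u hu)
      (convex_uIcc 0 h) Set.left_mem_uIcc Set.right_mem_uIcc
    have hG0 : G 0 = 0 := by simp [hG]
    rw [hG0, sub_zero, Real.norm_eq_abs, Real.norm_eq_abs, sub_zero] at key
    exact key
  calc |f (x + h) - f x - f1 x * h - f2 x * h ^ 2 / 2|
      = |G h| := by rw [hG]; ring_nf
    _ ≤ M * |h| * |h| * |h| := stepC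
    _ = M * |h| ^ 3 := by ring

/-- The averaged-shift family `U_μ(t)φ(x) = ∫ φ(x+ε√t) dμ(ε)` associated with a symmetric
probability measure `μ` with finite third absolute moment and positive second moment `a`
is a family of contractions on `C_∞(ℝ)`, `U_μ(0) = Id`, and on Schwartz functions its
derivative at `t = 0` is `(a/2)φ''`, uniformly on `ℝ`. -/
theorem chernoff_averaged_shift_family
    (μ : Measure ℝ) [IsProbabilityMeasure μ]
    (hsymm : μ.map (fun ε : ℝ => -ε) = μ)
    (hmom3 : Integrable (fun ε : ℝ => |ε| ^ 3) μ)
    (a : ℝ) (ha_def : a = ∫ ε, ε ^ 2 ∂μ) (ha_pos : 0 < a)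
    (U : ℝ → C₀(ℝ, ℝ) →L[ℝ] C₀(ℝ, ℝ))
    (hU : ∀ t ≥ (0 : ℝ), ∀ φ : C₀(ℝ, ℝ), ∀ x : ℝ,
      U t φ x = ∫ ε, φ (x + ε * Real.sqrt t) ∂μ) :
    (∀ t ≥ (0 : ℝ), ‖U t‖ ≤ 1) ∧
    U 0 = 1 ∧
    (∀ (φ : SchwartzMap ℝ ℝ) (ψ g : C₀(ℝ, ℝ)),
      (∀ x, ψ x = φ x) → (∀ x, g x = (a / 2) * deriv (deriv ⇑φ) x) →
      Tendsto (fun t : ℝ => ‖t⁻¹ • (U t ψ - ψ) - g‖) (𝓝[>] 0) (𝓝 0)) := by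
  -- integrability of lower moments
  have hint1 : Integrable (fun ε : ℝ => ε) μ := by
    refine Integrable.mono' ((integrable_const 1).add hmom3) aestronglyMeasurable_id ?_
    filter_upwards with ε
    have h1 : 0 ≤ |ε| := abs_nonneg ε
    simp only [Pi.add_apply, Real.norm_eq_abs]
    nlinarith [sq_nonneg (|ε| - 1), mul_nonneg h1 (sq_nonneg (|ε| - 1))]
  have hint2 : Integrable (fun ε : ℝ => ε ^ 2) μ := by
    refine Integrable.mono' ((integrable_const 1).add hmom3)
      (continuous_pow 2).aestronglyMeasurable ?_
    filter_upwards with ε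
    have h1 : 0 ≤ |ε| := abs_nonneg ε
    simp only [Pi.add_apply, Real.norm_eq_abs]
    rw [abs_pow]
    nlinarith [sq_nonneg (|ε| - 1), mul_nonneg h1 (sq_nonneg (|ε| - 1))]
  have hmean : ∫ ε, ε ∂μ = 0 := by
    have h1 : ∫ ε, ε ∂μ = ∫ ε, -ε ∂μ := by
      nth_rewrite 1 [← hsymm]
      exact integral_map measurable_neg.aemeasurable measurable_id.aestronglyMeasurable
    rw [integral_neg] at h1
    linarith
  refine ⟨?_, ?_, ?_⟩
  · -- contraction
    intro t ht
    refine ContinuousLinearMap.opNorm_le_bound _ zero_le_one fun φ => ?_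
    rw [one_mul]
    refine c0_norm_le' (norm_nonneg φ) fun x => ?_
    rw [hU t ht φ x, ← Real.norm_eq_abs]
    have := norm_integral_le_of_norm_le_const (μ := μ)
      (f := fun ε => φ (x + ε * Real.sqrt t)) (C := ‖φ‖)
      (Filter.Eventually.of_forall fun ε => by
        rw [Real.norm_eq_abs]; exact c0_apply_le_norm' φ _)
    simpa using this
  · -- identity at 0
    refine ContinuousLinearMap.ext fun φ => ?_
    ext x
    rw [hU 0 le_rfl φ x]
    simp
  · -- derivative on Schwartz functions
    intro φ ψ g hψ hg
    have hfC : ContDiff ℝ (⊤ : ℕ∞) ⇑φ := φ.smooth ⊤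
    set M := SchwartzMap.seminorm ℝ 0 3 φ with hMdef
    have hM : ∀ y, |deriv (deriv (deriv ⇑φ)) y| ≤ M := by
      intro y
      have h1 := SchwartzMap.norm_iteratedFDeriv_le_seminorm ℝ φ 3 y
      rw [norm_iteratedFDeriv_eq_norm_iteratedDeriv] at h1
      have h2 : iteratedDeriv 3 ⇑φ = deriv (deriv (deriv ⇑φ)) := by
        rw [show (3 : ℕ) = 2 + 1 from rfl, iteratedDeriv_succ,
          show (2 : ℕ) = 1 + 1 from rfl, iteratedDeriv_succ,
          show (1 : ℕ) = 0 + 1 from rfl, iteratedDeriv_succ, iteratedDeriv_zero]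
      rwa [h2, Real.norm_eq_abs] at h1
    have hM0 : 0 ≤ M := le_trans (abs_nonneg _) (hM 0)
    set C3 := ∫ ε, |ε| ^ 3 ∂μ with hC3def
    have hC30 : 0 ≤ C3 := integral_nonneg fun ε => by positivity
    -- key pointwise/norm estimate
    have key : ∀ t : ℝ, 0 < t →
        ‖t⁻¹ • (U t ψ - ψ) - g‖ ≤ M * C3 * Real.sqrt t := by
      intro t ht
      set s := Real.sqrt t with hsd
      have hs0 : 0 ≤ s := Real.sqrt_nonneg t
      have hs2 : s ^ 2 = t := Real.sq_sqrt ht.le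
      have hspos : 0 < s := Real.sqrt_pos.mpr ht
      refine c0_norm_le' (by positivity) fun x => ?_
      set c1 := deriv ⇑φ x with hc1
      set c2 := deriv (deriv ⇑φ) x with hc2
      set R : ℝ → ℝ := fun ε => φ (x + ε * s) - φ x - c1 * (ε * s) - c2 * (ε * s) ^ 2 / 2
        with hRdef
      have hR : ∀ ε : ℝ, |R ε| ≤ M * s ^ 3 * |ε| ^ 3 := by
        intro ε
        have := taylor3_bound' hfC hM x (ε * s)
        calc |R ε| ≤ M * |ε * s| ^ 3 := this
          _ = M * s ^ 3 * |ε| ^ 3 := by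
            rw [abs_mul, abs_of_nonneg hs0]; ring
      have hInt0 : Integrable (fun ε : ℝ => φ (x + ε * s)) μ := by
        refine Integrable.mono' (integrable_const ‖ψ‖)
          (φ.continuous.comp (by continuity)).aestronglyMeasurable ?_
        filter_upwards with ε
        rw [Real.norm_eq_abs, ← hψ (x + ε * s)]
        exact c0_apply_le_norm' ψ _
      have i1 : Integrable (fun ε : ℝ => c1 * (ε * s)) μ := by
        refine (hint1.const_mul (c1 * s)).congr
          (Filter.Eventually.of_forall fun ε => by ring)
      have i2 : Integrable (fun ε : ℝ => c2 * (ε * s) ^ 2 / 2) μ := by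
        refine (hint2.const_mul (c2 * s ^ 2 / 2)).congr
          (Filter.Eventually.of_forall fun ε => by ring)
      have j1 : Integrable (fun ε : ℝ => φ (x + ε * s) - φ x) μ :=
        hInt0.sub (integrable_const (φ x))
      have j2 : Integrable (fun ε : ℝ => φ (x + ε * s) - φ x - c1 * (ε * s)) μ := j1.sub i1
      have hIntR : Integrable R μ := j2.sub i2
      have e2 : ∫ ε, c1 * (ε * s) ∂μ = 0 := by
        have h : (fun ε : ℝ => c1 * (ε * s)) = fun ε => (c1 * s) * ε := by
          funext ε; ring
        rw [h, integral_const_mul, hmean, mul_zero]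
      have e3 : ∫ ε, c2 * (ε * s) ^ 2 / 2 ∂μ = c2 * t * a / 2 := by
        have h : (fun ε : ℝ => c2 * (ε * s) ^ 2 / 2) = fun ε => (c2 * s ^ 2 / 2) * ε ^ 2 := by
          funext ε; ring
        rw [h, integral_const_mul, ← ha_def, hs2]; ring
      have e1 : ∫ ε, R ε ∂μ
          = (∫ ε, φ (x + ε * s) ∂μ) - φ x - c2 * t * a / 2 := by
        calc ∫ ε, R ε ∂μ
            = (∫ ε, (φ (x + ε * s) - φ x - c1 * (ε * s)) ∂μ)
              - ∫ ε, c2 * (ε * s) ^ 2 / 2 ∂μ := integral_sub j2 i2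
          _ = ((∫ ε, (φ (x + ε * s) - φ x) ∂μ) - ∫ ε, c1 * (ε * s) ∂μ)
              - ∫ ε, c2 * (ε * s) ^ 2 / 2 ∂μ := by rw [integral_sub j1 i1]
          _ = ((∫ ε, φ (x + ε * s) ∂μ) - ∫ _ε, (φ x : ℝ) ∂μ) - 0 - (c2 * t * a / 2) := by
              rw [integral_sub hInt0 (integrable_const (φ x)), e2, e3]
          _ = (∫ ε, φ (x + ε * s) ∂μ) - φ x - c2 * t * a / 2 := by
              rw [integral_const]; simp
      have hUval : U t ψ x = ∫ ε, φ (x + ε * s) ∂μ := by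
        rw [hU t ht.le ψ x]
        exact integral_congr_ae (Filter.Eventually.of_forall fun ε => hψ _)
      have hptval : (t⁻¹ • (U t ψ - ψ) - g) x = t⁻¹ * ∫ ε, R ε ∂μ := by
        have h0 : (t⁻¹ • (U t ψ - ψ) - g) x = t⁻¹ * (U t ψ x - ψ x) - g x := by
          simp [smul_eq_mul]
        rw [h0, hUval, hψ x, hg x, ← hc2, e1]
        field_simp
        simp only [mul_comm s]
        try ring
      have hbound : |∫ ε, R ε ∂μ| ≤ M * s ^ 3 * C3 := by
        calc |∫ ε, R ε ∂μ| ≤ ∫ ε, |R ε| ∂μ := by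
              simpa [Real.norm_eq_abs] using
                norm_integral_le_integral_norm (f := R) (μ := μ)
          _ ≤ ∫ ε, M * s ^ 3 * |ε| ^ 3 ∂μ := by
              refine integral_mono hIntR.abs (hmom3.const_mul (M * s ^ 3)) fun ε => hR ε
          _ = M * s ^ 3 * C3 := integral_const_mul _ _
      rw [hptval, abs_mul, abs_of_nonneg (inv_nonneg.mpr ht.le)]
      have hs3 : s ^ 3 = t * s := by rw [pow_succ, hs2]; try ring
      calc t⁻¹ * |∫ ε, R ε ∂μ| ≤ t⁻¹ * (M * s ^ 3 * C3) := by
            exact mul_le_mul_of_nonneg_left hbound (inv_nonneg.mpr ht.le)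
        _ = M * C3 * s := by rw [hs3]; field_simp
    -- squeeze
    have hlim : Tendsto (fun t : ℝ => M * C3 * Real.sqrt t) (𝓝[>] 0) (𝓝 0) := by
      have h1 : Tendsto (fun t : ℝ => Real.sqrt t) (𝓝 0) (𝓝 0) := by
        simpa using (Real.continuous_sqrt.tendsto 0)
      have h2 := (h1.const_mul (M * C3)).mono_left
        (nhdsWithin_le_nhds (s := Set.Ioi (0 : ℝ)))
      simpa using h2
    refine squeeze_zero' ?_ ?_ hlim
    · filter_upwards with t using norm_nonneg _
    · filter_upwards [self_mem_nhdsWithin] with t ht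
      exact key t ht
end
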